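/- For 0 < α < 1 and Re β > 0, the function 𝕃_{α,β}(z) = ∑_{n=0}^∞ (-1)^n Γ(αn+β) z^n / n! has infinite radius of convergence, i.e., the series converges for all z ∈ ℂ. -/

import Mathlib

open Complex

/-- The modulus of `Γ(s)` is at most `Γ(Re s)` for `Re s > 0`. -/
lemma abs_Gamma_le_aux {s : ℂ} (hs : 0 < s.re) :
    ‖Complex.Gamma s‖ ≤ Real.Gamma s.re := by
  rw [Complex.Gamma_eq_integral hs, Complex.GammaIntegral, Real.Gamma_eq_integral hs]
  calc ‖∫ x in Set.Ioi (0:ℝ), (Real.exp (-x) : ℂ) * (x:ℂ) ^ (s - 1)‖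
      ≤ ∫ x in Set.Ioi (0:ℝ), ‖(Real.exp (-x) : ℂ) * (x:ℂ) ^ (s - 1)‖ := by
        exact MeasureTheory.norm_integral_le_integral_norm _
    _ = ∫ x in Set.Ioi (0:ℝ), Real.exp (-x) * x ^ (s.re - 1) := by
        refine MeasureTheory.setIntegral_congr_fun measurableSet_Ioi fun x hx => ?_
        simp only [norm_mul, Complex.norm_cpow_eq_rpow_re_of_pos hx,
          Complex.norm_real, Real.norm_eq_abs, abs_of_pos (Real.exp_pos _), Complex.sub_re, Complex.one_re]

/-- Log-convexity bound: `Γ(x + α) ≤ Γ(x) * x ^ α` for `x > 0`, `0 < α < 1`. -/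
lemma gamma_add_le_aux {α x : ℝ} (hα0 : 0 < α) (hα1 : α < 1) (hx : 0 < x) :
    Real.Gamma (x + α) ≤ Real.Gamma x * x ^ α := by
  have hΓ : 0 < Real.Gamma x := Real.Gamma_pos_of_pos hx
  have h := Real.Gamma_mul_add_mul_le_rpow_Gamma_mul_rpow_Gamma hx
    (by linarith : (0:ℝ) < x + 1) (by linarith : 0 < 1 - α) hα0 (by ring)
  have e1 : (1 - α) * x + α * (x + 1) = x + α := by ring
  have e2 : Real.Gamma (x + 1) = x * Real.Gamma x := Real.Gamma_add_one hx.ne'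
  rw [e1, e2] at h
  calc Real.Gamma (x + α) ≤ Real.Gamma x ^ (1 - α) * (x * Real.Gamma x) ^ α := h
    _ = Real.Gamma x ^ (1 - α) * (x ^ α * Real.Gamma x ^ α) := by
        rw [Real.mul_rpow hx.le hΓ.le]
    _ = (Real.Gamma x ^ (1 - α) * Real.Gamma x ^ α) * x ^ α := by ring
    _ = Real.Gamma x * x ^ α := by rw [← Real.rpow_add hΓ]; norm_num

/-- For `0 < α < 1` and `Re β > 0`, the series `∑ (-1)^n Γ(αn+β) z^n / n!`
converges for every `z ∈ ℂ` (infinite radius of convergence). -/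
theorem stmt_0 (α : ℝ) (β : ℂ) (hα0 : 0 < α) (hα1 : α < 1) (hβ : 0 < β.re) :
    ∀ z : ℂ, Summable (fun n : ℕ =>
      ((-1 : ℂ) ^ n * Complex.Gamma ((α : ℂ) * n + β) / (n.factorial : ℂ)) * z ^ n) := by
  intro z
  set c := β.re with hc
  set A := ‖z‖ with hA
  have hA0 : 0 ≤ A := norm_nonneg z
  -- the real majorant series
  have hg : Summable (fun n : ℕ =>
      Real.Gamma (α * n + c) * A ^ n / (n.factorial : ℝ)) := by
    apply summable_of_ratio_norm_eventually_le (r := 1/2) (by norm_num)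
    -- auxiliary tendsto facts
    have hx : Filter.Tendsto (fun n : ℕ => α * n + c) Filter.atTop Filter.atTop := by
      apply Filter.tendsto_atTop_add_const_right
      exact Filter.Tendsto.const_mul_atTop hα0 tendsto_natCast_atTop_atTop
    have h3 : Filter.Tendsto (fun n : ℕ => (α * n + c) ^ (α - 1) * A)
        Filter.atTop (nhds (0 * A)) := by
      apply Filter.Tendsto.mul_const
      have := (tendsto_rpow_neg_atTop (by linarith : 0 < 1 - α)).comp hx
      simpa [neg_sub, Function.comp_def] using this
    rw [zero_mul] at h3
    have h3' : ∀ᶠ n : ℕ in Filter.atTop, (α * n + c) ^ (α - 1) * A < 1/2 :=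
      h3.eventually_lt_const (by norm_num)
    have h1 : ∀ᶠ n : ℕ in Filter.atTop, (1:ℝ) ≤ α * n + c := hx.eventually_ge_atTop 1
    have h2 : ∀ᶠ n : ℕ in Filter.atTop, α * n + c ≤ n + 1 := by
      have : Filter.Tendsto (fun n : ℕ => (1 - α) * n) Filter.atTop Filter.atTop :=
        Filter.Tendsto.const_mul_atTop (by linarith) tendsto_natCast_atTop_atTop
      filter_upwards [this.eventually_ge_atTop (c - 1)] with n hn
      nlinarith [hn]
    filter_upwards [h1, h2, h3'] with n hn1 hn2 hn3
    set x : ℝ := α * n + c with hxdef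
    have hx0 : (0:ℝ) < x := by linarith
    have hΓ : 0 < Real.Gamma x := Real.Gamma_pos_of_pos hx0
    have key : Real.Gamma (α * ((n:ℝ)+1) + c) ≤ Real.Gamma x * x ^ α := by
      have : α * ((n:ℝ)+1) + c = x + α := by rw [hxdef]; ring
      rw [this]
      exact gamma_add_le_aux hα0 hα1 hx0
    have hxα : x ^ α * A ≤ (1/2) * (n + 1) := by
      have : x ^ α = x ^ (α - 1) * x := by
        rw [← Real.rpow_add_one hx0.ne' (α - 1)]; norm_num
      rw [this]
      have hxa1 : (0:ℝ) ≤ x ^ (α - 1) := Real.rpow_nonneg hx0.le _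
      calc x ^ (α - 1) * x * A = (x ^ (α - 1) * A) * x := by ring
        _ ≤ (1/2) * (n + 1) := by
            apply mul_le_mul hn3.le hn2 hx0.le (by norm_num)
    -- now the ratio bound
    rw [Real.norm_of_nonneg (by positivity), Real.norm_of_nonneg (by positivity)]
    push_cast [Nat.factorial_succ]
    have hfac : (0:ℝ) < (n.factorial : ℝ) := by positivity
    rw [div_le_iff₀ (by positivity), pow_succ]
    calc Real.Gamma (α * ((n:ℝ)+1) + c) * (A ^ n * A)
        ≤ (Real.Gamma x * x ^ α) * (A ^ n * A) :=
          mul_le_mul_of_nonneg_right key (by positivity)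
      _ = (x ^ α * A) * (Real.Gamma x * A ^ n) := by ring
      _ ≤ ((1/2) * (n + 1)) * (Real.Gamma x * A ^ n) := by
          apply mul_le_mul_of_nonneg_right hxα (by positivity)
      _ ≤ 1/2 * (Real.Gamma (α * n + c) * A ^ n / n.factorial) * (((n:ℝ)+1) * n.factorial) := by
          rw [← hxdef]
          apply le_of_eq
          field_simp
  -- compare with the majorant
  apply Summable.of_norm_bounded hg
  intro n
  have hre : ((α : ℂ) * n + β).re = α * n + c := by
    simp [Complex.add_re, Complex.mul_re, hc]
  have hre' : 0 < ((α : ℂ) * n + β).re := by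
    rw [hre]; positivity
  have habs : ‖Complex.Gamma ((α : ℂ) * n + β)‖ ≤ Real.Gamma (α * n + c) := by
    have := abs_Gamma_le_aux hre'
    rwa [hre] at this
  rw [norm_mul, norm_div, norm_mul, norm_pow, norm_neg, norm_one, one_pow, one_mul,
    norm_pow, Complex.norm_natCast]
  rw [div_mul_eq_mul_div, div_le_div_iff₀ (by positivity) (by positivity)]
  apply mul_le_mul_of_nonneg_right _ (by positivity)
  apply mul_le_mul_of_nonneg_right habs (by positivity)
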